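/- With Γ and Sybil clusters defined as above, any directed edge (t, z) of G_s with t ∈ K_x, z ∈ K_y, and x ≠ y satisfies z = y; that is, every inter-cluster edge points to the root of the target cluster. -/

import Mathlib

/-- `p` is a directed walk from `a` to `b` in the graph with adjacency `adj`. -/
def IsWalk {V : Type*} (adj : V → V → Prop) (a b : V) (p : List V) : Prop :=
  p.head? = some a ∧ p.getLast? = some b ∧ p.Chain' adj

/-- `b` is reachable from `a`. -/
def Reaches {V : Type*} (adj : V → V → Prop) (a b : V) : Prop :=
  ∃ p, IsWalk adj a b p

/-- `u` dominates `x` (w.r.t. root `s`): every walk from `s` to `x` contains `u`. -/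
def Dom {V : Type*} (adj : V → V → Prop) (s u x : V) : Prop :=
  ∀ p, IsWalk adj s x p → u ∈ p

/-- `z` is a meeting point of `x` and `y`: two directed walks from `x` and `y` to `z`
that are vertex-disjoint except for the common endpoint `z`. -/
def MeetPoint {V : Type*} (adj : V → V → Prop) (x y z : V) : Prop :=
  ∃ p q, IsWalk adj x z p ∧ IsWalk adj y z q ∧ ∀ w, w ∈ p → w ∈ q → w = z

/-- The smallest set of vertices containing `s`, the out-neighbors of `s` and `Γ₀`,
closed under adding meeting points of members (graphical non-Sybil agents). -/
inductive Gamma {V : Type*} (adj : V → V → Prop) (s : V) (Γ0 : Set V) : V → Prop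
  | base (x : V) : (x = s ∨ adj s x ∨ x ∈ Γ0) → Gamma adj s Γ0 x
  | meet (x y z : V) : Gamma adj s Γ0 x → Gamma adj s Γ0 y → MeetPoint adj x y z →
      Gamma adj s Γ0 z

/-- The Sybil cluster of `x`: vertices `t` admitting a walk from `x` to `t`
containing no vertex of `Γ` other than `x`. -/
def Cluster {V : Type*} (adj : V → V → Prop) (s : V) (Γ0 : Set V) (x t : V) : Prop :=
  ∃ p, IsWalk adj x t p ∧ ∀ w ∈ p, Gamma adj s Γ0 w → w = x

/-- Find the first element of `p` lying in `q`. -/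
lemma first_mem {V : Type*} (q : List V) :
    ∀ p : List V, (∃ w ∈ p, w ∈ q) →
      ∃ p₁ w p₂, p = p₁ ++ w :: p₂ ∧ w ∈ q ∧ ∀ v ∈ p₁, v ∉ q := by
  intro p
  induction p with
  | nil => rintro ⟨w, hw, _⟩; exact absurd hw List.not_mem_nil
  | cons a p ih =>
    rintro ⟨w, hw, hwq⟩
    by_cases ha : a ∈ q
    · exact ⟨[], a, p, rfl, ha, by simp⟩
    · rcases List.mem_cons.mp hw with rfl | hw
      · exact absurd hwq ha
      · obtain ⟨p₁, w', p₂, heq, h1, h2⟩ := ih ⟨w, hw, hwq⟩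
        refine ⟨a :: p₁, w', p₂, by rw [heq]; rfl, h1, ?_⟩
        intro v hv
        rcases List.mem_cons.mp hv with rfl | hv
        · exact ha
        · exact h2 v hv

/-- A prefix of a walk ending at an intermediate vertex is a walk. -/
lemma isWalk_prefix {V : Type*} {adj : V → V → Prop} {a b w : V} {p₁ p₂ : List V}
    (h : IsWalk adj a b (p₁ ++ w :: p₂)) : IsWalk adj a w (p₁ ++ [w]) := by
  obtain ⟨h1, _, h3⟩ := h
  refine ⟨?_, List.getLast?_concat, ?_⟩
  · cases p₁ with
    | nil => simpa using h1
    | cons c l => simpa using h1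
  · have : p₁ ++ w :: p₂ = (p₁ ++ [w]) ++ p₂ := by simp
    rw [this] at h3; unfold List.Chain' at h3; rw [List.isChain_append] at h3
    exact h3.1

/-- Extend a walk by one edge. -/
lemma isWalk_concat {V : Type*} {adj : V → V → Prop} {a b c : V} {p : List V}
    (h : IsWalk adj a b p) (hbc : adj b c) : IsWalk adj a c (p ++ [c]) := by
  obtain ⟨h1, h2, h3⟩ := h
  refine ⟨?_, List.getLast?_concat, ?_⟩
  · cases p with
    | nil => simp at h1
    | cons d l => simpa using h1
  · unfold List.Chain'; rw [List.isChain_append]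
    refine ⟨h3, List.isChain_singleton _, ?_⟩
    intro u hu v hv
    simp only [List.head?_cons, Option.mem_def, Option.some.injEq] at hv
    rw [h2] at hu
    simp only [Option.mem_def, Option.some.injEq] at hu
    subst hu; subst hv; exact hbc

/-- Every inter-cluster edge points to the root of the target cluster: if
`(t, z)` is an edge with `t ∈ K_x`, `z ∈ K_y` and `x ≠ y`, then `z = y`. -/
theorem stmt5 {V : Type*} [Fintype V] (adj : V → V → Prop) (s : V) (Γ0 : Set V)
    (hreach : ∀ x : V, Reaches adj s x) :
    ∀ t z x y : V, Gamma adj s Γ0 x → Gamma adj s Γ0 y →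
      Cluster adj s Γ0 x t → Cluster adj s Γ0 y z →
      adj t z → x ≠ y → z = y := by
  rintro t z x y hx hy ⟨p, hp, hpΓ⟩ ⟨q, hq, hqΓ⟩ hadj hxy
  by_contra hzy
  have hzq : z ∈ q := List.mem_of_getLast? hq.2.1
  have hzΓ : ¬ Gamma adj s Γ0 z := fun h => hzy (hqΓ z hzq h)
  -- extended walk from x to z
  have hP : IsWalk adj x z (p ++ [z]) := isWalk_concat hp hadj
  have hPΓ : ∀ w ∈ p ++ [z], Gamma adj s Γ0 w → w = x := by
    intro w hw hwΓ
    rcases List.mem_append.mp hw with hw | hw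
    · exact hpΓ w hw hwΓ
    · rw [List.mem_singleton.mp hw] at hwΓ; exact absurd hwΓ hzΓ
  have hzP : z ∈ p ++ [z] := List.mem_of_getLast? hP.2.1
  -- first vertex of P that belongs to q
  obtain ⟨p₁, w, p₂, hPeq, hwq, hp₁⟩ := first_mem q (p ++ [z]) ⟨z, hzP, hzq⟩
  obtain ⟨q₁, q₂, hqeq⟩ := List.append_of_mem hwq
  have hw1 : IsWalk adj x w (p₁ ++ [w]) := isWalk_prefix (hPeq ▸ hP)
  have hw2 : IsWalk adj y w (q₁ ++ [w]) := isWalk_prefix (hqeq ▸ hq)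
  have hmeet : MeetPoint adj x y w := by
    refine ⟨p₁ ++ [w], q₁ ++ [w], hw1, hw2, ?_⟩
    intro v hv1 hv2
    rcases List.mem_append.mp hv1 with hv | hv
    · exfalso
      apply hp₁ v hv
      rw [hqeq]
      rcases List.mem_append.mp hv2 with h | h
      · exact List.mem_append.mpr (Or.inl h)
      · rw [List.mem_singleton.mp h]; exact List.mem_append.mpr (Or.inr (List.mem_cons_self))
    · exact List.mem_singleton.mp hv
  have hwΓ : Gamma adj s Γ0 w := Gamma.meet x y w hx hy hmeet
  have h1 : w = x := hPΓ w (hPeq ▸ List.mem_append.mpr (Or.inr (List.mem_cons_self))) hwΓ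
  have h2 : w = y := hqΓ w (hqeq ▸ List.mem_append.mpr (Or.inr (List.mem_cons_self))) hwΓ
  exact hxy (h1 ▸ h2)
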